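/- (Proposition 2 pointwise inequalities) Fix ρ > 0 and K ≥ 2. For scoring vectors u, v ∈ ℝ^K with zero coordinate sums, let h(u) = argmax_k u_k and let y ∈ {1,…,K}. Then (i) 𝟙[h(u) ≠ y] ≤ L^ρ(v, y) + 𝟙[Φ_ρ(μ_{h(v)}(v, h(u))) = 1], and (ii) 𝟙[Φ_ρ(μ_{h(v)}(v, h(u))) = 1] ≤ L^ρ(u, y) + L^ρ(v, y). -/

import Mathlib

open MeasureTheory Finset

/-- The ramp loss with margin `ρ`. -/
noncomputable def ramp (ρ x : ℝ) : ℝ :=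
  if ρ ≤ x then 0 else if x ≤ 0 then 1 else 1 - x / ρ

/-- The absolute margin function: `margin w y k = w k` if `k = y`, else `-w k`. -/
def margin {K : ℕ} (w : Fin K → ℝ) (y k : Fin K) : ℝ :=
  if k = y then w k else -w k

/-- Entrywise L1 distance between the matrices of absolute margin violations
`M^ρ(u)` and `M^ρ(v)`, where `M^ρ_{i,j}(w) = Φ_ρ(μ_i(w,j))`. -/
noncomputable def l1diff (ρ : ℝ) {K : ℕ} (u v : Fin K → ℝ) : ℝ :=
  ∑ i : Fin K, ∑ j : Fin K, |ramp ρ (margin u j i) - ramp ρ (margin v j i)|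

/-- The margin-based multi-class loss `L^ρ(w, y) = ∑_k Φ_ρ(μ_k(w,y))`. -/
noncomputable def Lmargin (ρ : ℝ) {K : ℕ} (w : Fin K → ℝ) (y : Fin K) : ℝ :=
  ∑ k : Fin K, ramp ρ (margin w y k)

lemma ramp_nonneg {ρ x : ℝ} (hρ : 0 < ρ) : 0 ≤ ramp ρ x := by
  unfold ramp
  split_ifs with h1 h2
  · norm_num
  · norm_num
  · have hx : 0 < x := lt_of_not_ge h2
    have : x / ρ < 1 := (div_lt_one hρ).2 (lt_of_not_ge h1)
    linarith

lemma ramp_eq_one_of_nonpos {ρ x : ℝ} (hρ : 0 < ρ) (hx : x ≤ 0) : ramp ρ x = 1 := by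
  unfold ramp
  rw [if_neg (by linarith), if_pos hx]

lemma nonpos_of_ramp_eq_one {ρ x : ℝ} (hρ : 0 < ρ) (h : ramp ρ x = 1) : x ≤ 0 := by
  unfold ramp at h
  split_ifs at h with h1 h2
  · linarith
  · exact h2
  · exfalso
    have hx : 0 < x := lt_of_not_ge h2
    have : x / ρ = 0 := by linarith
    have : x = 0 := by
      field_simp at this
      simpa using this
    linarith

lemma max_nonneg' {K : ℕ} (hK : 2 ≤ K) {w : Fin K → ℝ} (hw : ∑ k : Fin K, w k = 0)
    (i : Fin K) (hi : ∀ k, w k ≤ w i) : 0 ≤ w i := by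
  by_contra h
  push_neg at h
  have hsum : ∑ k : Fin K, w k < 0 := by
    have hle : ∀ k ∈ Finset.univ, w k ≤ w i := fun k _ => hi k
    have := Finset.sum_le_card_nsmul Finset.univ w (w i) hle
    simp only [Finset.card_univ, Fintype.card_fin, nsmul_eq_mul] at this
    have hK0 : (0:ℝ) < K := by positivity
    nlinarith
  linarith

lemma Lmargin_nonneg {K : ℕ} (ρ : ℝ) (hρ : 0 < ρ) (w : Fin K → ℝ) (y : Fin K) :
    0 ≤ Lmargin ρ w y :=
  Finset.sum_nonneg fun _ _ => ramp_nonneg hρ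

lemma one_le_Lmargin {K : ℕ} {ρ : ℝ} (hρ : 0 < ρ) {w : Fin K → ℝ} {y k : Fin K}
    (h : margin w y k ≤ 0) : 1 ≤ Lmargin ρ w y := by
  have h1 : ramp ρ (margin w y k) = 1 := ramp_eq_one_of_nonpos hρ h
  have := Finset.single_le_sum (f := fun j => ramp ρ (margin w y j))
    (fun j _ => ramp_nonneg hρ) (Finset.mem_univ k)
  rw [h1] at this
  unfold Lmargin
  exact this

theorem prop2_pointwise {K : ℕ} (hK : 2 ≤ K) (ρ : ℝ) (hρ : 0 < ρ)
    (u v : Fin K → ℝ) (hu : ∑ k : Fin K, u k = 0) (hv : ∑ k : Fin K, v k = 0)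
    (iu iv : Fin K) (hiu : ∀ k : Fin K, u k ≤ u iu) (hiv : ∀ k : Fin K, v k ≤ v iv)
    (y : Fin K) :
    (if iu ≠ y then (1 : ℝ) else 0) ≤
        Lmargin ρ v y + (if ramp ρ (margin v iu iv) = 1 then (1 : ℝ) else 0) ∧
    (if ramp ρ (margin v iu iv) = 1 then (1 : ℝ) else 0) ≤
        Lmargin ρ u y + Lmargin ρ v y := by
  have hvmax : 0 ≤ v iv := max_nonneg' hK hv iv hiv
  have humax : 0 ≤ u iu := max_nonneg' hK hu iu hiu
  have hLv := Lmargin_nonneg ρ hρ v y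
  have hLu := Lmargin_nonneg ρ hρ u y
  constructor
  · by_cases hy : iu ≠ y
    · rw [if_pos hy]
      by_cases hvi : iv = iu
      · -- then iv ≠ y, margin v y iv = -v iv ≤ 0
        have hm : margin v y iv ≤ 0 := by
          unfold margin
          rw [if_neg (by rw [hvi]; exact hy)]
          linarith
        have h1 := one_le_Lmargin hρ (k := iv) hm
        have : (0:ℝ) ≤ if ramp ρ (margin v iu iv) = 1 then (1:ℝ) else 0 := by positivity
        linarith
      · have : ramp ρ (margin v iu iv) = 1 := by
          apply ramp_eq_one_of_nonpos hρ
          unfold margin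
          rw [if_neg hvi]
          linarith
        rw [if_pos this]
        linarith
    · rw [if_neg hy]
      have : (0:ℝ) ≤ if ramp ρ (margin v iu iv) = 1 then (1:ℝ) else 0 := by positivity
      linarith
  · by_cases hr : ramp ρ (margin v iu iv) = 1
    · rw [if_pos hr]
      have hm := nonpos_of_ramp_eq_one hρ hr
      by_cases hvi : iv = iu
      · -- v iv ≤ 0, so all v = 0
        have hviv : v iv ≤ 0 := by
          unfold margin at hm
          rwa [if_pos hvi] at hm
        have hall : ∀ k, v k = 0 := by
          intro k
          by_contra hk
          have hk' : v k < 0 := lt_of_le_of_ne (le_trans (hiv k) hviv) hk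
          have hsum : ∑ j : Fin K, v j < 0 := by
            have hle : ∀ j ∈ Finset.univ, v j ≤ 0 := fun j _ => le_trans (hiv j) hviv
            exact Finset.sum_neg' hle ⟨k, Finset.mem_univ k, hk'⟩
          linarith
        have hm2 : margin v y y ≤ 0 := by
          unfold margin
          rw [if_pos rfl, hall y]
        have := one_le_Lmargin hρ (k := y) hm2
        linarith
      · by_cases hy : iu = y
        · -- iv ≠ y, margin v y iv = -v iv ≤ 0
          have hm2 : margin v y iv ≤ 0 := by
            unfold margin
            rw [if_neg (by rw [hy] at hvi; exact hvi)]
            linarith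
          have := one_le_Lmargin hρ (k := iv) hm2
          linarith
        · have hm2 : margin u y iu ≤ 0 := by
            unfold margin
            rw [if_neg hy]
            linarith
          have := one_le_Lmargin hρ (k := iu) hm2
          linarith
    · rw [if_neg hr]
      linarith
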